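/- arXiv:1306.1935 — 6 statements merged into one kernel-verified Lean document; each statement's English description precedes it below -/
import Mathlib

section
/- Let S be a semigroup with zero 0_S, λ a cardinal ≥ 1, and B⁰_λ(S) its Brandt λ⁰-extension. Suppose τ is a topology on B⁰_λ(S) making it a semitopological semigroup. Then for all indices α, β, γ, δ ∈ λ, the subspaces S_{α,β} = {(α,s,β) : s ∈ S\{0_S}} ∪ {0} and S_{γ,δ} of B⁰_λ(S) are homeomorphic; moreover S_{α,α} and S_{β,β} are topologically isomorphic as semitopological monoids. -/
open Topology Set Filter

/-- The underlying set of the Brandt `λ⁰`-extension `B⁰_λ(S)`: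
nonzero elements are triples `(α, s, β)` with `s ≠ 0`, and `none` is the zero. -/
abbrev Brandt (S : Type*) [Zero S] (lam : Type*) : Type _ :=
  Option (lam × {s : S // s ≠ 0} × lam)

open Classical in
/-- Multiplication of the Brandt `λ⁰`-extension. -/
noncomputable def brandtMul {S : Type*} [MonoidWithZero S] {lam : Type*} :
    Brandt S lam → Brandt S lam → Brandt S lam
  | some (α, a, β), some (γ, b, δ) =>
      if h : β = γ ∧ a.1 * b.1 ≠ 0 then some (α, ⟨a.1 * b.1, h.2⟩, δ) else none
  | _, _ => none

/-- The set `S*_{α,β}` of nonzero elements of the `(α,β)` sheet. -/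
def sheet {S : Type*} [Zero S] {lam : Type*} (α β : lam) : Set (Brandt S lam) :=
  {x | ∃ s : {s : S // s ≠ 0}, x = some (α, s, β)}

/-- The sheet `S_{α,β} = S*_{α,β} ∪ {0}`. -/
def sheet0 {S : Type*} [Zero S] {lam : Type*} (α β : lam) : Set (Brandt S lam) :=
  sheet α β ∪ {none}

/-- The trace `(U)*_{α,β}` of a subset `U ⊆ S` on the `(α,β)` sheet (zero removed). -/
def sheetTrace {S : Type*} [Zero S] {lam : Type*} (α β : lam) (U : Set S) :
    Set (Brandt S lam) :=
  {x | ∃ s : {s : S // s ≠ 0}, s.1 ∈ U ∧ x = some (α, s, β)}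

/-- The basic neighbourhood `U_A(0)` of zero: all sheets outside the finite set `A`
together with the traces of `U` on the sheets from `A`. -/
def UA0 {S : Type*} [Zero S] {lam : Type*} (A : Set (lam × lam)) (U : Set S) :
    Set (Brandt S lam) :=
  {x | x = none ∨ ∃ (α β : lam) (s : {s : S // s ≠ 0}),
        x = some (α, s, β) ∧ ((α, β) ∉ A ∨ s.1 ∈ U)}

/-- The canonical topology `τ_B^S` on the Brandt `λ⁰`-extension, generated by the base
consisting of traces of open subsets of `S` on the sheets and of the sets `U_A(0)`. -/
def brandtTop (S : Type*) [Zero S] [TopologicalSpace S] (lam : Type*) :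
    TopologicalSpace (Brandt S lam) :=
  TopologicalSpace.generateFrom
    ({W | ∃ (α β : lam) (U : Set S), IsOpen U ∧ W = sheetTrace α β U} ∪
     {W | ∃ A : Set (lam × lam), A.Finite ∧
        ∃ U : Set S, IsOpen U ∧ (0 : S) ∈ U ∧ W = UA0 A U})

open Classical in
/-- The canonical copy of `S` as the sheet `S_{α,α}` inside `B⁰_λ(S)`. -/
noncomputable def brandtIncl {S : Type*} [Zero S] {lam : Type*} (α : lam) (s : S) :
    Brandt S lam :=
  if h : s = 0 then none else some (α, ⟨s, h⟩, α)

/-- Separate continuity of a multiplication. -/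
def SepCont {X : Type*} [TopologicalSpace X] (m : X → X → X) : Prop :=
  ∀ t : X, Continuous (m t) ∧ Continuous (fun x => m x t)

/-- A family of subsets is locally finite. -/
def SetLocallyFinite {X : Type*} [TopologicalSpace X] (F : Set (Set X)) : Prop :=
  ∀ x : X, ∃ U : Set X, x ∈ U ∧ IsOpen U ∧ {A ∈ F | (A ∩ U).Nonempty}.Finite

/-- `X` is pseudocompact: every locally finite family of nonempty open subsets is finite. -/
def Pseudocompact (X : Type*) [TopologicalSpace X] : Prop :=
  ∀ F : Set (Set X), (∀ U ∈ F, IsOpen U ∧ U.Nonempty) → SetLocallyFinite F → F.Finite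

/-- `X` is countably pracompact: there is a dense set `A` such that every infinite
subset of `A` has an accumulation point in `X`. -/
def CountablyPracompact (X : Type*) [TopologicalSpace X] : Prop :=
  ∃ A : Set X, Dense A ∧ ∀ B ⊆ A, B.Infinite → ∃ x : X, AccPt x (𝓟 B)

/-- `X` is countably compact: every countable open cover has a finite subcover. -/
def CountablyCompactSp (X : Type*) [TopologicalSpace X] : Prop :=
  ∀ F : Set (Set X), F.Countable → (∀ U ∈ F, IsOpen U) → ⋃₀ F = univ →
    ∃ G ⊆ F, G.Finite ∧ ⋃₀ G = univ

section Aux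

variable {S lam : Type*} [MonoidWithZero S]

lemma brandtMul_none_left (x : Brandt S lam) : brandtMul none x = none := by
  cases x <;> rfl

lemma brandtMul_none_right (x : Brandt S lam) : brandtMul x none = none := by
  cases x <;> rfl

/-- The translation map sending the sheet `S_{α,β}` to `S_{γ,δ}`. -/
noncomputable def Fm (h10 : (1 : S) ≠ 0) (α β γ δ : lam) (x : Brandt S lam) :
    Brandt S lam :=
  brandtMul (brandtMul (some (γ, ⟨1, h10⟩, α)) x) (some (β, ⟨1, h10⟩, δ))

lemma Fm_none (h10 : (1 : S) ≠ 0) (α β γ δ : lam) :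
    Fm h10 α β γ δ (none : Brandt S lam) = none := by
  simp [Fm, brandtMul_none_right, brandtMul_none_left]

lemma Fm_some (h10 : (1 : S) ≠ 0) (α β γ δ : lam) (s : {s : S // s ≠ 0}) :
    Fm h10 α β γ δ (some (α, s, β)) = some (γ, s, δ) := by
  have h1 : (1 : S) * s.1 ≠ 0 := by simpa using s.2
  have h2 : (1 : S) * s.1 * 1 ≠ 0 := by simpa using s.2
  simp only [Fm, brandtMul, dif_pos (⟨rfl, h1⟩ : α = α ∧ (1 : S) * s.1 ≠ 0),
    dif_pos (⟨rfl, h2⟩ : β = β ∧ (1 : S) * s.1 * 1 ≠ 0)]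
  exact congrArg some (by simp [Prod.ext_iff, Subtype.ext_iff])

lemma Fm_continuous [TopologicalSpace (Brandt S lam)]
    (hsep : SepCont (brandtMul (S := S) (lam := lam)))
    (h10 : (1 : S) ≠ 0) (α β γ δ : lam) : Continuous (Fm h10 α β γ δ) :=
  ((hsep (some (β, ⟨1, h10⟩, δ))).2).comp ((hsep (some (γ, ⟨1, h10⟩, α))).1)

lemma Fm_maps (h10 : (1 : S) ≠ 0) (α β γ δ : lam) {x : Brandt S lam}
    (hx : x ∈ sheet0 (S := S) α β) : Fm h10 α β γ δ x ∈ sheet0 (S := S) γ δ := by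
  rcases hx with ⟨s, rfl⟩ | hx
  · exact Or.inl ⟨s, Fm_some h10 α β γ δ s⟩
  · rcases hx with rfl
    exact Or.inr (Fm_none h10 α β γ δ)

lemma Fm_Fm (h10 : (1 : S) ≠ 0) (α β γ δ : lam) {x : Brandt S lam}
    (hx : x ∈ sheet0 (S := S) α β) :
    Fm h10 γ δ α β (Fm h10 α β γ δ x) = x := by
  rcases hx with ⟨s, rfl⟩ | hx
  · rw [Fm_some, Fm_some]
  · rcases hx with rfl
    rw [Fm_none, Fm_none]

/-- The homeomorphism between the sheets `S_{α,β}` and `S_{γ,δ}`. -/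
noncomputable def sheetHomeo [TopologicalSpace (Brandt S lam)]
    (hsep : SepCont (brandtMul (S := S) (lam := lam)))
    (h10 : (1 : S) ≠ 0) (α β γ δ : lam) :
    ↥(sheet0 (S := S) α β) ≃ₜ ↥(sheet0 (S := S) γ δ) where
  toFun x := ⟨Fm h10 α β γ δ x.1, Fm_maps h10 α β γ δ x.2⟩
  invFun x := ⟨Fm h10 γ δ α β x.1, Fm_maps h10 γ δ α β x.2⟩
  left_inv x := Subtype.ext (Fm_Fm h10 α β γ δ x.2)
  right_inv x := Subtype.ext (Fm_Fm h10 γ δ α β x.2)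
  continuous_toFun :=
    ((Fm_continuous hsep h10 α β γ δ).comp continuous_subtype_val).subtype_mk _
  continuous_invFun :=
    ((Fm_continuous hsep h10 γ δ α β).comp continuous_subtype_val).subtype_mk _

lemma eq_zero_of_one_eq_zero (h10 : (1 : S) = 0) (s : S) : s = 0 := by
  calc s = s * 1 := (mul_one s).symm
    _ = s * 0 := by rw [h10]
    _ = 0 := mul_zero s

lemma sheet0_degenerate (h10 : (1 : S) = 0) (α β : lam) :
    sheet0 (S := S) α β = {none} := by
  ext x
  constructor
  · rintro (⟨s, rfl⟩ | hx)
    · exact absurd (eq_zero_of_one_eq_zero h10 s.1) s.2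
    · exact hx
  · exact fun hx => Or.inr hx

end Aux

/-- In any topology making the Brandt extension a semitopological semigroup, all the
sheets `S_{α,β}` are homeomorphic, and the diagonal sheets `S_{α,α}`, `S_{β,β}` are
topologically isomorphic (multiplication- and zero-preserving homeomorphic). -/
theorem brandt_sheets_homeomorphic {S lam : Type*} [MonoidWithZero S]
    [tB : TopologicalSpace (Brandt S lam)]
    (hsep : SepCont (brandtMul (S := S) (lam := lam))) :
    ∀ α β γ δ : lam,
      Nonempty (↥(sheet0 (S := S) α β) ≃ₜ ↥(sheet0 (S := S) γ δ)) ∧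
      ∃ g : ↥(sheet0 (S := S) α α) ≃ₜ ↥(sheet0 (S := S) β β),
        (∀ (x y : ↥(sheet0 (S := S) α α))
            (hxy : brandtMul x.1 y.1 ∈ sheet0 (S := S) α α),
          (g ⟨brandtMul x.1 y.1, hxy⟩).1 = brandtMul (g x).1 (g y).1) ∧
        (∀ h0 : (none : Brandt S lam) ∈ sheet0 (S := S) α α, (g ⟨none, h0⟩).1 = none) := by
  intro α β γ δ
  by_cases h10 : (1 : S) = 0
  · -- degenerate case: all sheets are `{none}`
    have hset : ∀ a b c d : lam, sheet0 (S := S) a b = sheet0 (S := S) c d := by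
      intro a b c d
      rw [sheet0_degenerate h10, sheet0_degenerate h10]
    refine ⟨⟨Homeomorph.setCongr (hset α β γ δ)⟩, Homeomorph.setCongr (hset α α β β), ?_, ?_⟩
    · intro x y hxy
      rfl
    · intro h0
      rfl
  · refine ⟨⟨sheetHomeo hsep h10 α β γ δ⟩, sheetHomeo hsep h10 α α β β, ?_, ?_⟩
    · intro x y hxy
      obtain ⟨x, hx⟩ := x
      obtain ⟨y, hy⟩ := y
      rcases hx with ⟨a, rfl⟩ | hx
      · rcases hy with ⟨b, rfl⟩ | hy
        · -- both nonzero
          show Fm h10 α α β β (brandtMul (some (α, a, α)) (some (α, b, α)))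
              = brandtMul (Fm h10 α α β β (some (α, a, α)))
                  (Fm h10 α α β β (some (α, b, α)))
          rw [Fm_some, Fm_some]
          by_cases hab : a.1 * b.1 = 0
          · have h1 : brandtMul (some (α, a, α)) (some (α, b, α)) = (none : Brandt S lam) := by
              simp [brandtMul, hab]
            have h2 : brandtMul (some (β, a, β)) (some (β, b, β)) = (none : Brandt S lam) := by
              simp [brandtMul, hab]
            rw [h1, h2, Fm_none]
          · have h1 : brandtMul (some (α, a, α)) (some (α, b, α))
                = some (α, (⟨a.1 * b.1, hab⟩ : {s : S // s ≠ 0}), α) := by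
              simp [brandtMul, hab]
            have h2 : brandtMul (some (β, a, β)) (some (β, b, β))
                = some (β, (⟨a.1 * b.1, hab⟩ : {s : S // s ≠ 0}), β) := by
              simp [brandtMul, hab]
            rw [h1, h2, Fm_some]
        · rcases hy with rfl
          show Fm h10 α α β β (brandtMul (some (α, a, α)) none)
              = brandtMul (Fm h10 α α β β (some (α, a, α))) (Fm h10 α α β β none)
          rw [brandtMul_none_right, Fm_none, brandtMul_none_right]
      · rcases hx with rfl
        show Fm h10 α α β β (brandtMul none y)
            = brandtMul (Fm h10 α α β β none) (Fm h10 α α β β y)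
        rw [brandtMul_none_left, Fm_none, brandtMul_none_left]
    · intro h0
      exact Fm_none h10 α α β β
end

section
/- Let λ ≥ 1 be a cardinal and let B⁰_λ(S) be a topological Brandt λ⁰-extension of a semitopological monoid S with zero, in the class of Hausdorff semitopological semigroups. If the space B⁰_λ(S) is pseudocompact (resp. countably pracompact, countably compact, sequentially compact, compact), then so is S. -/
open Topology Set Filter

section Descend

variable {X Y : Type*} [TopologicalSpace X] [TopologicalSpace Y]

lemma pseudocompact_of_surj {g : X → Y} (hc : Continuous g) (hs : Function.Surjective g)
    (hX : Pseudocompact X) : Pseudocompact Y := by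
  intro F hF hlf
  have himg : ((fun U => g ⁻¹' U) '' F).Finite := by
    apply hX
    · rintro _ ⟨U, hU, rfl⟩
      exact ⟨(hF U hU).1.preimage hc, ((hF U hU).2.preimage hs)⟩
    · intro x
      obtain ⟨V, hxV, hVo, hVfin⟩ := hlf (g x)
      refine ⟨g ⁻¹' V, hxV, hVo.preimage hc, ?_⟩
      have : {A ∈ (fun U => g ⁻¹' U) '' F | (A ∩ g ⁻¹' V).Nonempty} ⊆
          (fun U => g ⁻¹' U) '' {A ∈ F | (A ∩ V).Nonempty} := by
        rintro _ ⟨⟨U, hU, rfl⟩, hne⟩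
        refine ⟨U, ⟨hU, ?_⟩, rfl⟩
        obtain ⟨z, hz⟩ := hne
        exact ⟨g z, hz.1, hz.2⟩
      exact (hVfin.image _).subset this
  exact Set.Finite.of_finite_image himg (hs.preimage_injective.injOn)

lemma pracompact_of_surj [T1Space X] {g : X → Y} (hc : Continuous g)
    (hs : Function.Surjective g) (hX : CountablyPracompact X) : CountablyPracompact Y := by
  obtain ⟨A, hA, hacc⟩ := hX
  refine ⟨g '' A, hs.denseRange.dense_image hc hA, ?_⟩
  intro B hB hBinf
  have hsel : ∀ b ∈ B, ∃ x ∈ A, g x = b := by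
    intro b hb
    obtain ⟨x, hx, hgx⟩ := hB hb
    exact ⟨x, hx, hgx⟩
  choose t ht hgt using hsel
  set B' : Set X := {x | ∃ b, ∃ hb : b ∈ B, x = t b hb} with hB'def
  have hB'A : B' ⊆ A := by rintro _ ⟨b, hb, rfl⟩; exact ht b hb
  have himg : g '' B' = B := by
    apply Set.Subset.antisymm
    · rintro _ ⟨_, ⟨b, hb, rfl⟩, rfl⟩
      rw [hgt b hb]; exact hb
    · intro b hb
      exact ⟨t b hb, ⟨b, hb, rfl⟩, hgt b hb⟩
  have hinj : ∀ x1 ∈ B', ∀ x2 ∈ B', g x1 = g x2 → x1 = x2 := by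
    rintro _ ⟨b1, hb1, rfl⟩ _ ⟨b2, hb2, rfl⟩ h
    rw [hgt b1 hb1, hgt b2 hb2] at h
    subst h; rfl
  have hB'inf : B'.Infinite := by
    intro hfin
    exact hBinf (himg ▸ hfin.image g)
  obtain ⟨x, hx⟩ := hacc B' hB'A hB'inf
  refine ⟨g x, accPt_iff_nhds.2 ?_⟩
  intro V hV
  obtain ⟨x1, ⟨hx1V, hx1B⟩, hx1ne⟩ := accPt_iff_nhds.1 hx (g ⁻¹' V) (hc.continuousAt.preimage_mem_nhds hV)
  by_cases h1 : g x1 = g x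
  · have hW : g ⁻¹' V ∩ {x1}ᶜ ∈ 𝓝 x := by
      refine Filter.inter_mem (hc.continuousAt.preimage_mem_nhds hV) ?_
      exact compl_singleton_mem_nhds (fun h => hx1ne h.symm)
    obtain ⟨x2, ⟨⟨hx2V, hx2ne1⟩, hx2B⟩, hx2ne⟩ := accPt_iff_nhds.1 hx _ hW
    refine ⟨g x2, ⟨hx2V, himg ▸ ⟨x2, hx2B, rfl⟩⟩, ?_⟩
    intro h2
    exact hx2ne1 (hinj x2 hx2B x1 hx1B (h2.trans h1.symm))
  · exact ⟨g x1, ⟨hx1V, himg ▸ ⟨x1, hx1B, rfl⟩⟩, h1⟩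

open Classical in
lemma ctblCompact_of_surj {g : X → Y} (hc : Continuous g) (hs : Function.Surjective g)
    (hX : CountablyCompactSp X) : CountablyCompactSp Y := by
  intro F hFc hFo hFcov
  set F' : Set (Set X) := (fun U => g ⁻¹' U) '' F with hF'def
  have hcov' : ⋃₀ F' = univ := by
    ext x
    simp only [Set.mem_sUnion, Set.mem_univ, iff_true]
    have : g x ∈ ⋃₀ F := hFcov ▸ Set.mem_univ _
    obtain ⟨U, hU, hxU⟩ := this
    exact ⟨g ⁻¹' U, ⟨U, hU, rfl⟩, hxU⟩
  obtain ⟨G', hG'sub, hG'fin, hG'cov⟩ := hX F' (hFc.image _)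
    (by rintro _ ⟨U, hU, rfl⟩; exact (hFo U hU).preimage hc) hcov'
  set u : Set X → Set Y := fun V => if h : ∃ U ∈ F, g ⁻¹' U = V then h.choose else ∅ with hu
  have hspec : ∀ V ∈ G', u V ∈ F ∧ g ⁻¹' (u V) = V := by
    intro V hV
    obtain ⟨U, hU, hUV⟩ := hG'sub hV
    have h : ∃ U ∈ F, g ⁻¹' U = V := ⟨U, hU, hUV⟩
    simp only [hu, dif_pos h]
    exact ⟨h.choose_spec.1, h.choose_spec.2⟩
  refine ⟨u '' G', ?_, hG'fin.image _, ?_⟩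
  · rintro _ ⟨V, hV, rfl⟩; exact (hspec V hV).1
  · ext y
    simp only [Set.mem_sUnion, Set.mem_univ, iff_true]
    obtain ⟨x, rfl⟩ := hs y
    have : x ∈ ⋃₀ G' := hG'cov ▸ Set.mem_univ _
    obtain ⟨V, hV, hxV⟩ := this
    refine ⟨u V, ⟨V, hV, rfl⟩, ?_⟩
    have := (hspec V hV).2
    rw [← this] at hxV
    exact hxV

lemma seqCompact_of_surj {g : X → Y} (hc : Continuous g) (hs : Function.Surjective g)
    (hX : SeqCompactSpace X) : SeqCompactSpace Y := by
  constructor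
  intro v hv
  set σ := Function.surjInv hs with hσ
  obtain ⟨x, -, φ, hφ, htend⟩ := hX.isSeqCompact_univ (x := fun n => σ (v n)) (fun n => Set.mem_univ _)
  refine ⟨g x, Set.mem_univ _, φ, hφ, ?_⟩
  have : v ∘ φ = g ∘ ((fun n => σ (v n)) ∘ φ) := by
    funext n
    simp [σ, Function.surjInv_eq hs]
  rw [this]
  exact (hc.tendsto x).comp htend

lemma compact_of_surj {g : X → Y} (hc : Continuous g) (hs : Function.Surjective g)
    (hX : CompactSpace X) : CompactSpace Y := by
  have : IsCompact (g '' Set.univ) := isCompact_univ.image hc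
  rw [Set.image_univ, hs.range_eq] at this
  exact ⟨this⟩

end Descend

/-- If a topological Brandt extension of a semitopological monoid `S` with zero is
pseudocompact (resp. countably pracompact, countably compact, sequentially compact,
compact), then so is `S`. -/
theorem brandt_compactness_descends {S lam : Type*} [MonoidWithZero S]
    [TopologicalSpace S] [tB : TopologicalSpace (Brandt S lam)]
    [T2Space (Brandt S lam)]
    (hsep : SepCont (brandtMul (S := S) (lam := lam)))
    (hS : ∀ t : S, Continuous (fun x => t * x) ∧ Continuous (fun x => x * t))
    (alpha : lam) (hemb : Topology.IsEmbedding (brandtIncl (S := S) (lam := lam) alpha)) :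
    (Pseudocompact (Brandt S lam) → Pseudocompact S) ∧
    (CountablyPracompact (Brandt S lam) → CountablyPracompact S) ∧
    (CountablyCompactSp (Brandt S lam) → CountablyCompactSp S) ∧
    (SeqCompactSpace (Brandt S lam) → SeqCompactSpace S) ∧
    (CompactSpace (Brandt S lam) → CompactSpace S) := by
  classical
  obtain ⟨g, hc, hs⟩ : ∃ g : Brandt S lam → S, Continuous g ∧ Function.Surjective g := by
    by_cases h1 : (1 : S) = 0
    · refine ⟨fun _ => 0, continuous_const, fun s => ⟨none, ?_⟩⟩
      calc (0 : S) = s * 0 := (mul_zero s).symm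
        _ = s * 1 := by rw [h1]
        _ = s := mul_one s
    · set e : Brandt S lam := some (alpha, ⟨1, h1⟩, alpha) with he
      set g : Brandt S lam → S := (fun x =>
        match x with
        | none => 0
        | some (β, s, γ) => if β = alpha ∧ γ = alpha then s.1 else 0)
        with hg
      have hincl0 : brandtIncl (S := S) (lam := lam) alpha 0 = none := by
        rw [brandtIncl]; rw [dif_pos rfl]
      have hincl : ∀ s : {s : S // s ≠ 0}, brandtIncl (S := S) (lam := lam) alpha s.1
          = some (alpha, s, alpha) := by
        intro s; rw [brandtIncl]; rw [dif_neg s.2]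
      have hkey : brandtIncl (S := S) (lam := lam) alpha ∘ g =
          fun x => brandtMul (brandtMul e x) e := by
        funext x
        match x with
        | none =>
          show brandtIncl alpha (g none) = brandtMul (brandtMul e none) e
          have h2 : brandtMul e none = none := by rw [he]; exact rfl
          have h3 : g none = 0 := by rw [hg]
          rw [h3, hincl0, h2, he]
          exact rfl
        | some (β, s, γ) =>
          show brandtIncl alpha (g (some (β, s, γ)))
              = brandtMul (brandtMul e (some (β, s, γ))) e
          by_cases hβ : β = alpha
          · have h1s : (1 : S) * s.1 ≠ 0 := by rw [one_mul]; exact s.2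
            have h2 : brandtMul e (some (β, s, γ)) = some (alpha, ⟨1 * s.1, h1s⟩, γ) := by
              rw [he]
              show (if h : alpha = β ∧ (1 : S) * s.1 ≠ 0
                  then some (alpha, (⟨(1 : S) * s.1, h.2⟩ : {s : S // s ≠ 0}), γ) else none) = _
              rw [dif_pos (⟨hβ.symm, h1s⟩ : alpha = β ∧ (1 : S) * s.1 ≠ 0)]
            rw [h2]
            by_cases hγ : γ = alpha
            · have h1s1 : (1 : S) * s.1 * 1 ≠ 0 := by rw [mul_one]; exact h1s
              have h3 : brandtMul (some (alpha, (⟨(1 : S) * s.1, h1s⟩ : {s : S // s ≠ 0}), γ)) e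
                  = some (alpha, ⟨(1 : S) * s.1 * 1, h1s1⟩, alpha) := by
                rw [he]
                show (if h : γ = alpha ∧ (1 : S) * s.1 * 1 ≠ 0
                    then some (alpha, (⟨(1 : S) * s.1 * 1, h.2⟩ : {s : S // s ≠ 0}), alpha) else none) = _
                rw [dif_pos (⟨hγ, h1s1⟩ : γ = alpha ∧ (1 : S) * s.1 * 1 ≠ 0)]
              have h4 : g (some (β, s, γ)) = s.1 := by
                rw [hg]
                show (if β = alpha ∧ γ = alpha then s.1 else 0) = s.1
                rw [if_pos (⟨hβ, hγ⟩ : β = alpha ∧ γ = alpha)]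
              have hss : (⟨(1 : S) * s.1 * 1, h1s1⟩ : {s : S // s ≠ 0}) = s :=
                Subtype.ext (by simp)
              rw [h3, h4, hincl s]
              exact congrArg (fun t => some (alpha, t, alpha)) hss.symm
            · have h3 : brandtMul (some (alpha, (⟨(1 : S) * s.1, h1s⟩ : {s : S // s ≠ 0}), γ)) e
                  = none := by
                rw [he]
                show (if h : γ = alpha ∧ (1 : S) * s.1 * 1 ≠ 0
                    then some (alpha, (⟨(1 : S) * s.1 * 1, h.2⟩ : {s : S // s ≠ 0}), alpha) else none) = _
                rw [dif_neg (fun h => hγ h.1)]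
              have h4 : g (some (β, s, γ)) = 0 := by
                rw [hg]
                show (if β = alpha ∧ γ = alpha then s.1 else 0) = 0
                rw [if_neg (fun h => hγ h.2)]
              rw [h3, h4, hincl0]
          · have h2 : brandtMul e (some (β, s, γ)) = none := by
              rw [he]
              show (if h : alpha = β ∧ (1 : S) * s.1 ≠ 0
                  then some (alpha, (⟨(1 : S) * s.1, h.2⟩ : {s : S // s ≠ 0}), γ) else none) = _
              rw [dif_neg (fun h => hβ h.1.symm)]
            have h4 : g (some (β, s, γ)) = 0 := by
              rw [hg]
              show (if β = alpha ∧ γ = alpha then s.1 else 0) = 0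
              rw [if_neg (fun h => hβ h.1)]
            rw [h2, h4, hincl0, he]
            exact rfl
      have hgc : Continuous g := by
        rw [hemb.continuous_iff, hkey]
        exact ((hsep e).2).comp ((hsep e).1)
      refine ⟨g, hgc, fun s => ?_⟩
      by_cases hz : s = 0
      · refine ⟨none, ?_⟩
        have h3 : g none = 0 := by rw [hg]
        rw [h3, hz]
      · refine ⟨some (alpha, ⟨s, hz⟩, alpha), ?_⟩
        rw [hg]
        show (if alpha = alpha ∧ alpha = alpha then s else 0) = s
        rw [if_pos (⟨rfl, rfl⟩ : alpha = alpha ∧ alpha = alpha)]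
  exact ⟨pseudocompact_of_surj hc hs, pracompact_of_surj hc hs,
    ctblCompact_of_surj hc hs, seqCompact_of_surj hc hs, compact_of_surj hc hs⟩
end

section
/- Let λ ≥ 1 be a cardinal and let B⁰_λ(S) be a topological Brandt λ⁰-extension of a semitopological monoid S with zero in the class of semitopological semigroups. If the space B⁰_λ(S) is semiregular and pseudocompact, then for every open neighbourhood U of the zero 0 there exist only finitely many pairs (α,β) ∈ λ × λ such that S_{α,β} ⊄ U. -/
open Topology Set Filter

/-- A space is semiregular if it has a base of regular open sets. -/
def Semiregular (X : Type*) [TopologicalSpace X] : Prop :=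
  ∀ (x : X) (U : Set X), IsOpen U → x ∈ U →
    ∃ V : Set X, x ∈ V ∧ V ⊆ U ∧ V = interior (closure V)

lemma brandt_sheet_isOpen {S lam : Type*} [MonoidWithZero S]
    [tB : TopologicalSpace (Brandt S lam)] [T2Space (Brandt S lam)]
    (hsep : SepCont (brandtMul (S := S) (lam := lam))) (α β : lam) :
    IsOpen (sheet (S := S) α β) := by
  by_cases h1 : (1 : S) = 0
  · convert isOpen_empty
    ext x
    simp only [sheet, mem_setOf_eq, mem_empty_iff_false, iff_false]
    rintro ⟨s, rfl⟩
    exact s.2 (by rw [← one_mul s.1, h1, zero_mul])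
  · have hmulPos : ∀ (α' β' γ' δ' : lam) (a b : {s : S // s ≠ 0}) (hb : β' = γ')
        (hab : a.1 * b.1 ≠ 0),
        brandtMul (some (α', a, β')) (some (γ', b, δ')) = some (α', ⟨a.1 * b.1, hab⟩, δ') := by
      intro α' β' γ' δ' a b hb hab
      simp only [brandtMul]
      rw [dif_pos ⟨hb, hab⟩]
    have hmulNeg : ∀ (α' β' γ' δ' : lam) (a b : {s : S // s ≠ 0})
        (h : ¬ (β' = γ' ∧ a.1 * b.1 ≠ 0)),
        brandtMul (some (α', a, β')) (some (γ', b, δ')) = none := by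
      intro α' β' γ' δ' a b h
      simp only [brandtMul]
      rw [dif_neg h]
    have hfc : Continuous (fun x : Brandt S lam =>
        brandtMul (brandtMul (some (α, ⟨1, h1⟩, α)) x) (some (β, ⟨(1 : S), h1⟩, β))) :=
      ((hsep (some (β, ⟨(1 : S), h1⟩, β))).2).comp ((hsep (some (α, ⟨(1 : S), h1⟩, α))).1)
    have hkey : sheet (S := S) α β = (fun x : Brandt S lam =>
        brandtMul (brandtMul (some (α, ⟨1, h1⟩, α)) x) (some (β, ⟨(1 : S), h1⟩, β)))
          ⁻¹' ({none}ᶜ) := by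
      ext x
      rcases x with _ | ⟨γ, a, δ⟩
      · simp only [sheet, mem_setOf_eq, mem_preimage, mem_compl_iff, mem_singleton_iff]
        constructor
        · rintro ⟨s, h⟩; cases h
        · intro h; exact absurd rfl h
      · simp only [sheet, mem_setOf_eq, mem_preimage, mem_compl_iff, mem_singleton_iff]
        by_cases hg : α = γ
        · subst hg
          have hab : (1 : S) * a.1 ≠ 0 := by rw [one_mul]; exact a.2
          rw [hmulPos α α α δ ⟨(1 : S), h1⟩ a rfl hab]
          by_cases hd : δ = β
          · subst hd
            have hab2 : ((1 : S) * a.1) * 1 ≠ 0 := by rw [mul_one]; exact hab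
            rw [hmulPos α δ δ δ ⟨(1 : S) * a.1, hab⟩ ⟨(1 : S), h1⟩ rfl hab2]
            simp only [ne_eq, reduceCtorEq, not_false_eq_true, iff_true]
            exact ⟨a, rfl⟩
          · rw [hmulNeg α δ β β ⟨(1 : S) * a.1, hab⟩ ⟨(1 : S), h1⟩ (fun h => hd h.1)]
            simp only [ne_eq, not_true_eq_false, iff_false, not_exists]
            intro s hs
            injection hs with hs
            exact hd (congrArg (fun z : lam × {s : S // s ≠ 0} × lam => z.2.2) hs)
        · rw [hmulNeg α α γ δ ⟨(1 : S), h1⟩ a (fun h => hg h.1)]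
          have hnone : brandtMul (none : Brandt S lam)
              (some (β, (⟨(1 : S), h1⟩ : {s : S // s ≠ 0}), β)) = none := rfl
          rw [hnone]
          simp only [ne_eq, not_true_eq_false, iff_false, not_exists]
          intro s hs
          injection hs with hs
          exact hg (congrArg (fun z : lam × {s : S // s ≠ 0} × lam => z.1) hs).symm
    rw [hkey]
    exact isOpen_compl_singleton.preimage hfc

/-- In a semiregular pseudocompact semitopological Brandt extension, every open
neighbourhood of zero contains all but finitely many sheets `S_{α,β}`. -/
theorem brandt_semiregular_pseudocompact_nhds_zero {S lam : Type*} [MonoidWithZero S]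
    [TopologicalSpace S] [tB : TopologicalSpace (Brandt S lam)]
    [T2Space (Brandt S lam)]
    (hsep : SepCont (brandtMul (S := S) (lam := lam)))
    (hS : ∀ t : S, Continuous (fun x => t * x) ∧ Continuous (fun x => x * t))
    (alpha : lam) (hemb : Topology.IsEmbedding (brandtIncl (S := S) (lam := lam) alpha))
    (hsr : Semiregular (Brandt S lam)) (hpc : Pseudocompact (Brandt S lam)) :
    ∀ U : Set (Brandt S lam), IsOpen U → none ∈ U →
      {p : lam × lam | ¬ (sheet0 (S := S) p.1 p.2 ⊆ U)}.Finite := by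
  intro U hU h0
  by_contra hinf
  obtain ⟨V, h0V, hVU, hVreg⟩ := hsr none U hU h0
  have hVopen : IsOpen V := by rw [hVreg]; exact isOpen_interior
  set P := {p : lam × lam | ¬ sheet0 (S := S) p.1 p.2 ⊆ U} with hP
  set W : lam × lam → Set (Brandt S lam) := fun p => sheet p.1 p.2 \ closure V with hW
  have hWopen : ∀ p, IsOpen (W p) :=
    fun p => (brandt_sheet_isOpen hsep p.1 p.2).sdiff isClosed_closure
  have hdisj : ∀ p q : lam × lam, p ≠ q → ∀ x, x ∈ sheet (S := S) p.1 p.2 →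
      x ∈ sheet (S := S) q.1 q.2 → False := by
    rintro p q hpq x ⟨s, rfl⟩ ⟨t, ht⟩
    injection ht with ht
    exact hpq (Prod.ext (congrArg (fun z : lam × {s : S // s ≠ 0} × lam => z.1) ht)
      (congrArg (fun z : lam × {s : S // s ≠ 0} × lam => z.2.2) ht))
  have hWne : ∀ p ∈ P, (W p).Nonempty := by
    intro p hp
    by_contra h
    rw [not_nonempty_iff_eq_empty] at h
    have hsub : sheet (S := S) p.1 p.2 ⊆ closure V := by
      intro x hx
      by_contra hxc
      have : x ∈ W p := ⟨hx, hxc⟩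
      rw [h] at this
      exact this
    have hsubV : sheet (S := S) p.1 p.2 ⊆ V := by
      rw [hVreg]
      exact interior_maximal hsub (brandt_sheet_isOpen hsep _ _)
    refine hp ?_
    intro x hx
    rcases hx with hx | hx
    · exact hVU (hsubV hx)
    · rw [mem_singleton_iff] at hx; subst hx; exact h0
  have hinj : InjOn W P := by
    intro p hp q hq hpqW
    by_contra hne
    obtain ⟨x, hx⟩ := hWne p hp
    have hx2 : x ∈ W q := hpqW ▸ hx
    exact hdisj p q hne x hx.1 hx2.1
  have hF : (W '' P).Finite := by
    apply hpc
    · rintro A ⟨p, hp, rfl⟩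
      exact ⟨hWopen p, hWne p hp⟩
    · intro x
      rcases x with _ | ⟨γ, a, δ⟩
      · refine ⟨V, h0V, hVopen, ?_⟩
        convert finite_empty
        ext A
        simp only [mem_setOf_eq, mem_empty_iff_false, iff_false, not_and]
        rintro ⟨p, hp, rfl⟩ ⟨x, hxW, hxV⟩
        exact hxW.2 (subset_closure hxV)
      · refine ⟨sheet (S := S) γ δ, ⟨a, rfl⟩, brandt_sheet_isOpen hsep γ δ, ?_⟩
        apply Set.Finite.subset (finite_singleton (W (γ, δ)))
        rintro A ⟨⟨p, hp, rfl⟩, x, hxW, hxs⟩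
        have hpe : p = (γ, δ) := by
          by_contra hne
          exact hdisj p (γ, δ) hne x hxW.1 hxs
        rw [hpe]
        exact rfl
  exact hinf (Set.Finite.of_finite_image hF hinj)
end

section
/- Let S be a Hausdorff semitopological monoid with zero, λ ≥ 1 a cardinal, and equip B⁰_λ(S) with the topology τ_B^S whose basic neighbourhoods of a nonzero point (α,s,β) are sets (U(s))*_{α,β} with U(s) an open neighbourhood of s in S not containing 0_S removed appropriately, and whose basic neighbourhoods of 0 are sets U_A(0) = ⋃_{(α,β)∉A} S_{α,β} ∪ ⋃_{(γ,δ)∈A} (U(0_S))_{γ,δ} for finite A ⊆ λ×λ and open neighbourhoods U(0_S) of 0_S. Then (B⁰_λ(S), τ_B^S) is regular if and only if S is regular. -/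
open Topology Set Filter

/-! ### Auxiliary lemmas -/

section BrandtAux

variable {S lam : Type*} [Zero S] [TopologicalSpace S]

/-- The generating family of `brandtTop`. -/
def brandtGen (S : Type*) [Zero S] [TopologicalSpace S] (lam : Type*) :
    Set (Set (Brandt S lam)) :=
  {W | ∃ (α β : lam) (U : Set S), IsOpen U ∧ W = sheetTrace α β U} ∪
  {W | ∃ A : Set (lam × lam), A.Finite ∧
      ∃ U : Set S, IsOpen U ∧ (0 : S) ∈ U ∧ W = UA0 A U}

lemma brandtTop_eq :
    brandtTop S lam = TopologicalSpace.generateFrom (brandtGen S lam) := rfl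

omit [TopologicalSpace S] in
lemma sheetTrace_mono {α β : lam} {U V : Set S} (h : U ⊆ V) :
    sheetTrace (lam := lam) α β U ⊆ sheetTrace α β V := by
  rintro x ⟨s, hs, rfl⟩; exact ⟨s, h hs, rfl⟩

omit [TopologicalSpace S] in
lemma UA0_subset {A A' : Set (lam × lam)} {U U' : Set S} (hA : A ⊆ A') (hU : U ⊆ U') :
    UA0 (S := S) A' U ⊆ UA0 A U' := by
  rintro x (rfl | ⟨α, β, s, rfl, h⟩)
  · exact Or.inl rfl
  · exact Or.inr ⟨α, β, s, rfl, h.imp (fun hn hm => hn (hA hm)) (fun hs => hU hs)⟩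

omit [TopologicalSpace S] in
lemma mem_sheetTrace_iff {α β γ δ : lam} {t : {s : S // s ≠ 0}} {U : Set S} :
    (some (γ, t, δ) : Brandt S lam) ∈ sheetTrace α β U ↔ γ = α ∧ δ = β ∧ t.1 ∈ U := by
  constructor
  · rintro ⟨s, hs, heq⟩
    simp only [Option.some.injEq, Prod.mk.injEq] at heq
    obtain ⟨rfl, rfl, rfl⟩ := heq
    exact ⟨rfl, rfl, hs⟩
  · rintro ⟨rfl, rfl, h⟩
    exact ⟨t, h, rfl⟩

omit [TopologicalSpace S] in
lemma none_not_mem_sheetTrace {α β : lam} {U : Set S} :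
    (none : Brandt S lam) ∉ sheetTrace α β U := by
  rintro ⟨s, -, h⟩; cases h

omit [TopologicalSpace S] in
lemma none_mem_UA0 {A : Set (lam × lam)} {U : Set S} :
    (none : Brandt S lam) ∈ UA0 A U := Or.inl rfl

omit [TopologicalSpace S] in
lemma some_mem_UA0_iff {γ δ : lam} {t : {s : S // s ≠ 0}} {A : Set (lam × lam)} {U : Set S} :
    (some (γ, t, δ) : Brandt S lam) ∈ UA0 A U ↔ ((γ, δ) ∉ A ∨ t.1 ∈ U) := by
  constructor
  · rintro (h | ⟨γ', δ', s, heq, hc⟩)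
    · cases h
    · simp only [Option.some.injEq, Prod.mk.injEq] at heq
      obtain ⟨rfl, rfl, rfl⟩ := heq
      exact hc
  · intro h; exact Or.inr ⟨γ, δ, t, rfl, h⟩

lemma isOpen_sheetTrace {U : Set S} (hU : IsOpen U) (α β : lam) :
    IsOpen[brandtTop S lam] (sheetTrace α β U) :=
  TopologicalSpace.GenerateOpen.basic _ (Or.inl ⟨α, β, U, hU, rfl⟩)

lemma isOpen_UA0 {A : Set (lam × lam)} {U : Set S} (hA : A.Finite) (hU : IsOpen U)
    (h0 : (0 : S) ∈ U) : IsOpen[brandtTop S lam] (UA0 A U) :=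
  TopologicalSpace.GenerateOpen.basic _ (Or.inr ⟨A, hA, U, hU, h0, rfl⟩)

lemma basic_of_mem_some {t : Set (Brandt S lam)}
    (ht : TopologicalSpace.GenerateOpen (brandtGen S lam) t) :
    ∀ (α β : lam) (a : {s : S // s ≠ 0}), some (α, a, β) ∈ t →
      ∃ U : Set S, IsOpen U ∧ a.1 ∈ U ∧ sheetTrace α β U ⊆ t := by
  induction ht with
  | basic W hW =>
      intro α β a hx
      rcases hW with ⟨γ, δ, U, hU, rfl⟩ | ⟨A, hA, U, hU, h0, rfl⟩
      · obtain ⟨rfl, rfl, hsU⟩ := mem_sheetTrace_iff.mp hx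
        exact ⟨U, hU, hsU, subset_rfl⟩
      · rcases some_mem_UA0_iff.mp hx with hnA | hsU
        · refine ⟨Set.univ, isOpen_univ, trivial, ?_⟩
          rintro x ⟨s', -, rfl⟩
          exact Or.inr ⟨α, β, s', rfl, Or.inl hnA⟩
        · refine ⟨U, hU, hsU, ?_⟩
          rintro x ⟨s', hs', rfl⟩
          exact Or.inr ⟨α, β, s', rfl, Or.inr hs'⟩
  | univ => exact fun α β a _ => ⟨Set.univ, isOpen_univ, trivial, fun _ _ => trivial⟩
  | inter s t hs ht ihs iht =>
      intro α β a hx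
      obtain ⟨U1, hU1, ha1, h1⟩ := ihs α β a hx.1
      obtain ⟨U2, hU2, ha2, h2⟩ := iht α β a hx.2
      exact ⟨U1 ∩ U2, hU1.inter hU2, ⟨ha1, ha2⟩, fun y hy =>
        ⟨h1 (sheetTrace_mono inter_subset_left hy),
         h2 (sheetTrace_mono inter_subset_right hy)⟩⟩
  | sUnion K hK ih =>
      intro α β a hx
      obtain ⟨W, hWK, hxW⟩ := hx
      obtain ⟨U, hU, ha, hsub⟩ := ih W hWK α β a hxW
      exact ⟨U, hU, ha, hsub.trans (subset_sUnion_of_mem hWK)⟩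

lemma basic_of_mem_none {t : Set (Brandt S lam)}
    (ht : TopologicalSpace.GenerateOpen (brandtGen S lam) t) :
    (none : Brandt S lam) ∈ t →
      ∃ (A : Set (lam × lam)) (U : Set S), A.Finite ∧ IsOpen U ∧ (0 : S) ∈ U ∧
        UA0 A U ⊆ t := by
  induction ht with
  | basic W hW =>
      intro hx
      rcases hW with ⟨γ, δ, U, hU, rfl⟩ | ⟨A, hA, U, hU, h0, rfl⟩
      · exact absurd hx none_not_mem_sheetTrace
      · exact ⟨A, U, hA, hU, h0, subset_rfl⟩
  | univ =>
      exact fun _ => ⟨∅, Set.univ, finite_empty, isOpen_univ, trivial, fun _ _ => trivial⟩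
  | inter s t hs ht ihs iht =>
      intro hx
      obtain ⟨A1, U1, hA1, hU1, h01, h1⟩ := ihs hx.1
      obtain ⟨A2, U2, hA2, hU2, h02, h2⟩ := iht hx.2
      exact ⟨A1 ∪ A2, U1 ∩ U2, hA1.union hA2, hU1.inter hU2, ⟨h01, h02⟩, fun y hy =>
        ⟨h1 (UA0_subset subset_union_left inter_subset_left hy),
         h2 (UA0_subset subset_union_right inter_subset_right hy)⟩⟩
  | sUnion K hK ih =>
      intro hx
      obtain ⟨W, hWK, hxW⟩ := hx
      obtain ⟨A, U, hA, hU, h0, hsub⟩ := ih W hWK hxW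
      exact ⟨A, U, hA, hU, h0, hsub.trans (subset_sUnion_of_mem hWK)⟩

lemma mem_nhds_some {α β : lam} {a : {s : S // s ≠ 0}} {s : Set (Brandt S lam)}
    (hs : s ∈ @nhds _ (brandtTop S lam) (some (α, a, β))) :
    ∃ U : Set S, IsOpen U ∧ a.1 ∈ U ∧ sheetTrace α β U ⊆ s := by
  letI := brandtTop S lam
  obtain ⟨t, hts, hto, hxt⟩ := mem_nhds_iff.mp hs
  obtain ⟨U, hU, ha, h⟩ := basic_of_mem_some hto α β a hxt
  exact ⟨U, hU, ha, h.trans hts⟩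

lemma mem_nhds_none {s : Set (Brandt S lam)}
    (hs : s ∈ @nhds _ (brandtTop S lam) (none : Brandt S lam)) :
    ∃ (A : Set (lam × lam)) (U : Set S), A.Finite ∧ IsOpen U ∧ (0 : S) ∈ U ∧
      UA0 A U ⊆ s := by
  letI := brandtTop S lam
  obtain ⟨t, hts, hto, hxt⟩ := mem_nhds_iff.mp hs
  obtain ⟨A, U, hA, hU, h0, h⟩ := basic_of_mem_none hto hxt
  exact ⟨A, U, hA, hU, h0, h.trans hts⟩

omit [TopologicalSpace S] in
lemma compl_sheetTrace (α β : lam) (C : Set S) :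
    (sheetTrace (lam := lam) α β C)ᶜ = UA0 {(α, β)} Cᶜ := by
  ext x
  constructor
  · intro hx
    cases x with
    | none => exact Or.inl rfl
    | some p =>
        obtain ⟨γ, t, δ⟩ := p
        refine Or.inr ⟨γ, δ, t, rfl, ?_⟩
        by_cases h : (γ, δ) = (α, β)
        · rw [Prod.mk.injEq] at h
          obtain ⟨rfl, rfl⟩ := h
          exact Or.inr fun hC => hx ⟨t, hC, rfl⟩
        · exact Or.inl (by simpa using h)
  · rintro (rfl | ⟨γ, δ, t, rfl, h⟩)
    · exact none_not_mem_sheetTrace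
    · intro hx
      obtain ⟨rfl, rfl, hC⟩ := mem_sheetTrace_iff.mp hx
      rcases h with h | h
      · exact h rfl
      · exact h hC

omit [TopologicalSpace S] in
lemma compl_UA0 (A : Set (lam × lam)) (C : Set S) :
    (UA0 (S := S) A C)ᶜ = ⋃ p ∈ A, sheetTrace (lam := lam) p.1 p.2 Cᶜ := by
  ext x
  simp only [mem_compl_iff, mem_iUnion, exists_prop]
  constructor
  · intro hx
    cases x with
    | none => exact absurd (Or.inl rfl) hx
    | some p =>
        obtain ⟨γ, t, δ⟩ := p
        have h : ¬((γ, δ) ∉ A ∨ t.1 ∈ C) := fun h => hx (Or.inr ⟨γ, δ, t, rfl, h⟩)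
        push_neg at h
        exact ⟨(γ, δ), h.1, t, h.2, rfl⟩
  · rintro ⟨⟨γ, δ⟩, hA, t, hC, rfl⟩ hx
    rcases some_mem_UA0_iff.mp hx with h | h
    · exact h hA
    · exact hC h

lemma isClosed_sheetTrace {C : Set S} (hC : IsClosed C) (h0 : (0 : S) ∉ C) (α β : lam) :
    IsClosed[brandtTop S lam] (sheetTrace α β C) := by
  letI := brandtTop S lam
  rw [← isOpen_compl_iff, compl_sheetTrace]
  exact isOpen_UA0 (finite_singleton _) hC.isOpen_compl h0

lemma isClosed_UA0 {A : Set (lam × lam)} {C : Set S} (hC : IsClosed C) :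
    IsClosed[brandtTop S lam] (UA0 A C) := by
  letI := brandtTop S lam
  rw [← isOpen_compl_iff, compl_UA0]
  exact isOpen_biUnion fun p _ => isOpen_sheetTrace hC.isOpen_compl p.1 p.2

omit [TopologicalSpace S] in
lemma brandtIncl_zero (α : lam) : brandtIncl (S := S) (lam := lam) α 0 = none :=
  dif_pos rfl

omit [TopologicalSpace S] in
lemma brandtIncl_ne {y : S} (hy : y ≠ 0) (α : lam) :
    brandtIncl (lam := lam) α y = some (α, ⟨y, hy⟩, α) :=
  dif_neg hy

lemma continuous_brandtIncl [T1Space S] (α : lam) :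
    @Continuous S (Brandt S lam) _ (brandtTop S lam) (brandtIncl α) := by
  rw [brandtTop_eq]
  apply continuous_generateFrom_iff.mpr
  rintro W (⟨γ, δ, U, hU, rfl⟩ | ⟨A, hA, U, hU, h0, rfl⟩)
  · by_cases h : γ = α ∧ δ = α
    · obtain ⟨h1, h2⟩ := h
      have heq : brandtIncl (lam := lam) α ⁻¹' sheetTrace γ δ U = U \ {0} := by
        ext y
        by_cases hy : y = 0
        · subst hy
          simp only [mem_preimage, brandtIncl_zero, mem_diff, mem_singleton_iff]
          exact ⟨fun h => absurd h none_not_mem_sheetTrace, fun h => absurd trivial h.2⟩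
        · simp only [mem_preimage, brandtIncl_ne hy, mem_diff, mem_singleton_iff,
            mem_sheetTrace_iff, h1, h2, true_and]
          exact ⟨fun h => ⟨h, hy⟩, fun h => h.1⟩
      rw [heq]
      exact hU.sdiff isClosed_singleton
    · have heq : brandtIncl (lam := lam) α ⁻¹' sheetTrace γ δ U = ∅ := by
        ext y
        simp only [mem_preimage, mem_empty_iff_false, iff_false]
        intro hy
        by_cases hy0 : y = 0
        · rw [hy0, brandtIncl_zero] at hy
          exact none_not_mem_sheetTrace hy
        · rw [brandtIncl_ne hy0] at hy
          obtain ⟨h1, h2, -⟩ := mem_sheetTrace_iff.mp hy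
          exact h ⟨h1.symm, h2.symm⟩
      rw [heq]
      exact isOpen_empty
  · by_cases h : (α, α) ∈ A
    · have heq : brandtIncl (lam := lam) α ⁻¹' UA0 A U = U := by
        ext y
        by_cases hy : y = 0
        · subst hy
          simp only [mem_preimage, brandtIncl_zero]
          exact ⟨fun _ => h0, fun _ => none_mem_UA0⟩
        · simp only [mem_preimage, brandtIncl_ne hy, some_mem_UA0_iff]
          exact ⟨fun hc => hc.resolve_left (by simpa using h), fun hc => Or.inr hc⟩
      rw [heq]
      exact hU
    · have heq : brandtIncl (lam := lam) α ⁻¹' UA0 A U = Set.univ := by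
        ext y
        simp only [mem_preimage, mem_univ, iff_true]
        by_cases hy : y = 0
        · rw [hy, brandtIncl_zero]; exact none_mem_UA0
        · rw [brandtIncl_ne hy]
          exact some_mem_UA0_iff.mpr (Or.inl h)
      rw [heq]
      exact isOpen_univ

end BrandtAux

/-- The canonical Brandt extension topology `τ_B^S` is regular iff `S` is regular. -/
theorem brandt_regular_iff {S lam : Type*} [MonoidWithZero S] [TopologicalSpace S]
    [T2Space S] [Nonempty lam] (hsep : SepCont (fun x y : S => x * y)) :
    @RegularSpace (Brandt S lam) (brandtTop S lam) ↔ RegularSpace S := by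
  letI : TopologicalSpace (Brandt S lam) := brandtTop S lam
  constructor
  · intro hB
    obtain ⟨α⟩ := ‹Nonempty lam›
    have hcont : Continuous (brandtIncl (S := S) (lam := lam) α) := continuous_brandtIncl α
    apply RegularSpace.of_exists_mem_nhds_isClosed_subset
    intro x s hs
    obtain ⟨U, hUs, hU, hxU⟩ := mem_nhds_iff.mp hs
    by_cases hx0 : x = 0
    · subst hx0
      have hopen : IsOpen (UA0 (S := S) (lam := lam) {(α, α)} U) :=
        isOpen_UA0 (finite_singleton _) hU hxU
      obtain ⟨T, hT, hTc, hTsub⟩ :=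
        exists_mem_nhds_isClosed_subset (hopen.mem_nhds none_mem_UA0)
      obtain ⟨A, V, hA, hV, h0V, hVsub⟩ := mem_nhds_none hT
      refine ⟨brandtIncl α ⁻¹' T, ?_, hTc.preimage hcont, ?_⟩
      · refine mem_of_superset (hV.mem_nhds h0V) fun y hy => ?_
        show brandtIncl α y ∈ T
        apply hVsub
        by_cases hy0 : y = 0
        · rw [hy0, brandtIncl_zero]; exact none_mem_UA0
        · rw [brandtIncl_ne hy0]
          exact some_mem_UA0_iff.mpr (Or.inr hy)
      · intro y hy
        have hyT : brandtIncl α y ∈ UA0 {(α, α)} U := hTsub hy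
        by_cases hy0 : y = 0
        · rw [hy0]; exact hUs hxU
        · rw [brandtIncl_ne hy0] at hyT
          rcases some_mem_UA0_iff.mp hyT with h | h
          · exact absurd rfl h
          · exact hUs h
    · have hp : (some (α, ⟨x, hx0⟩, α) : Brandt S lam) ∈ sheetTrace α α U :=
        ⟨⟨x, hx0⟩, hxU, rfl⟩
      obtain ⟨T, hT, hTc, hTsub⟩ :=
        exists_mem_nhds_isClosed_subset ((isOpen_sheetTrace hU α α).mem_nhds hp)
      obtain ⟨V, hV, hxV, hVsub⟩ := mem_nhds_some hT
      refine ⟨brandtIncl α ⁻¹' T, ?_, hTc.preimage hcont, ?_⟩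
      · refine mem_of_superset
          (((hV.sdiff isClosed_singleton).mem_nhds ⟨hxV, hx0⟩)) ?_
        rintro y ⟨hyV, hy0⟩
        show brandtIncl α y ∈ T
        apply hVsub
        rw [brandtIncl_ne hy0]
        exact ⟨⟨y, hy0⟩, hyV, rfl⟩
      · intro y hy
        have hyT : brandtIncl α y ∈ sheetTrace α α U := hTsub hy
        by_cases hy0 : y = 0
        · rw [hy0, brandtIncl_zero] at hyT
          exact absurd hyT none_not_mem_sheetTrace
        · rw [brandtIncl_ne hy0] at hyT
          exact hUs (mem_sheetTrace_iff.mp hyT).2.2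
  · intro hS
    apply RegularSpace.of_exists_mem_nhds_isClosed_subset
    intro x s hs
    cases x with
    | none =>
        obtain ⟨A, U, hA, hU, h0, hsub⟩ := mem_nhds_none hs
        obtain ⟨t, ht, htc, hts⟩ := exists_mem_nhds_isClosed_subset (hU.mem_nhds h0)
        obtain ⟨V, hVt, hV, h0V⟩ := mem_nhds_iff.mp ht
        refine ⟨UA0 A t, ?_, isClosed_UA0 htc, (UA0_subset subset_rfl hts).trans hsub⟩
        exact mem_of_superset ((isOpen_UA0 hA hV h0V).mem_nhds none_mem_UA0)
          (UA0_subset subset_rfl hVt)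
    | some p =>
        obtain ⟨α, a, β⟩ := p
        obtain ⟨U, hU, haU, hsub⟩ := mem_nhds_some hs
        have hU' : IsOpen (U \ {0}) := hU.sdiff isClosed_singleton
        obtain ⟨t, ht, htc, hts⟩ :=
          exists_mem_nhds_isClosed_subset (hU'.mem_nhds ⟨haU, a.2⟩)
        obtain ⟨V, hVt, hV, haV⟩ := mem_nhds_iff.mp ht
        have h0t : (0 : S) ∉ t := fun h => (hts h).2 rfl
        refine ⟨sheetTrace α β t, ?_, isClosed_sheetTrace htc h0t α β, ?_⟩
        · exact mem_of_superset ((isOpen_sheetTrace hV α β).mem_nhds ⟨a, haV, rfl⟩)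
            (sheetTrace_mono hVt)
        · exact (sheetTrace_mono (hts.trans diff_subset)).trans hsub
end

section
/- Let λ be a finite nonzero cardinal, S a Hausdorff semitopological semigroup with zero, and τ_B a topology on B⁰_λ(S) making it a semitopological semigroup with τ_B restricted to S_{α,α} equal to the topology of S for some α. If A ⊆ S is open in S and 0_S ∉ A, then A_{β,γ} = {(β,s,γ) : s ∈ A} is open in (B⁰_λ(S), τ_B) for all β, γ ∈ λ; and if A ⊆ S is open and 0_S ∈ A, then ⋃_{β,γ∈λ} A_{β,γ} is open in (B⁰_λ(S), τ_B). -/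
open Topology Set Filter

open Classical in
theorem brandtMul_some_some {S : Type*} [MonoidWithZero S] {lam : Type*}
    (α β γ δ : lam) (a b : {s : S // s ≠ 0}) :
    brandtMul (S := S) (lam := lam) (some (α, a, β)) (some (γ, b, δ)) =
      if h : β = γ ∧ a.1 * b.1 ≠ 0 then some (α, ⟨a.1 * b.1, h.2⟩, δ) else none := rfl

/-- For finite `λ`: open subsets of `S` not containing `0_S` give open sheets, and open
subsets containing `0_S` give open unions over all sheets. -/
theorem brandt_finite_open {S lam : Type*} [MonoidWithZero S] [TopologicalSpace S]
    [T2Space S] [Finite lam] [Nonempty lam]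
    [tB : TopologicalSpace (Brandt S lam)] [T2Space (Brandt S lam)]
    (hsep : SepCont (brandtMul (S := S) (lam := lam)))
    (hS : ∀ t : S, Continuous (fun x => t * x) ∧ Continuous (fun x => x * t))
    (alpha : lam) (hemb : Topology.IsEmbedding (brandtIncl (S := S) (lam := lam) alpha)) :
    ∀ A : Set S, IsOpen A →
      (((0 : S) ∉ A → ∀ β γ : lam, IsOpen (sheetTrace (lam := lam) β γ A)) ∧
       ((0 : S) ∈ A → IsOpen (UA0 (Set.univ : Set (lam × lam)) A))) := by
  intro A hA
  obtain ⟨V, hV, hVA⟩ := hemb.toIsInducing.isOpen_iff.mp hA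
  by_cases h10 : (1 : S) = 0
  · -- degenerate case: S is trivial, no nonzero elements
    have hempty : ∀ s : {s : S // s ≠ 0}, False := by
      intro s
      exact s.2 (by rw [← mul_one s.1, h10, mul_zero])
    constructor
    · intro _ β γ
      have : sheetTrace (lam := lam) β γ A = ∅ := by
        ext x
        simp only [sheetTrace, Set.mem_setOf_eq, Set.mem_empty_iff_false, iff_false]
        rintro ⟨s, -, -⟩
        exact hempty s
      rw [this]; exact isOpen_empty
    · intro _
      have : UA0 (Set.univ : Set (lam × lam)) A = Set.univ := by
        ext x
        simp only [UA0, Set.mem_setOf_eq, Set.mem_univ, iff_true]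
        cases x with
        | none => exact Or.inl rfl
        | some p => exact (hempty p.2.1).elim
      rw [this]; exact isOpen_univ
  · -- main case
    set one : {s : S // s ≠ 0} := ⟨1, h10⟩ with hone
    set g : lam → lam → Brandt S lam → Brandt S lam := fun β γ x =>
      brandtMul (brandtMul (some (alpha, one, β)) x) (some (γ, one, alpha)) with hg
    have hgc : ∀ β γ, Continuous (g β γ) := by
      intro β γ
      exact ((hsep (some (γ, one, alpha))).2).comp ((hsep (some (alpha, one, β))).1)
    have hgmem : ∀ (β γ : lam) (s : {s : S // s ≠ 0}),
        g β γ (some (β, s, γ)) = some (alpha, s, alpha) := by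
      intro β γ s
      have hs1 : one.1 * s.1 ≠ 0 := by simpa [hone] using s.2
      simp only [hg, brandtMul_some_some]
      rw [dif_pos ⟨rfl, hs1⟩, brandtMul_some_some,
        dif_pos ⟨rfl, by simpa [hone] using s.2⟩]
      simp [hone, Subtype.ext_iff]
    have hgnone : ∀ (β γ : lam) (x : Brandt S lam),
        (∀ s : {s : S // s ≠ 0}, x ≠ some (β, s, γ)) → g β γ x = none := by
      intro β γ x hx
      cases x with
      | none => rfl
      | some p =>
        obtain ⟨β', s, γ'⟩ := p
        by_cases hb : β = β'
        · subst hb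
          have hgg : γ' ≠ γ := by
            intro h; subst h; exact hx s rfl
          simp only [hg, brandtMul_some_some]
          rw [dif_pos ⟨rfl, by simpa [hone] using s.2⟩, brandtMul_some_some,
            dif_neg (by tauto)]
        · simp only [hg, brandtMul_some_some]
          rw [dif_neg (by tauto)]
          rfl
    have hincl : ∀ s : {s : S // s ≠ 0},
        brandtIncl (S := S) (lam := lam) alpha s.1 = some (alpha, s, alpha) := by
      intro s
      simp only [brandtIncl, dif_neg s.2]
    have hincl0 : brandtIncl (S := S) (lam := lam) alpha 0 = none := by
      simp [brandtIncl]
    have hmemV : ∀ s : {s : S // s ≠ 0}, (some (alpha, s, alpha) ∈ V ↔ s.1 ∈ A) := by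
      intro s
      rw [← hincl s, ← hVA]; rfl
    have hnoneV : (none ∈ V ↔ (0 : S) ∈ A) := by
      rw [← hincl0, ← hVA]; rfl
    constructor
    · intro h0 β γ
      have heq : sheetTrace (lam := lam) β γ A = g β γ ⁻¹' V := by
        ext x
        constructor
        · rintro ⟨s, hsA, rfl⟩
          simp only [Set.mem_preimage, hgmem]
          exact (hmemV s).mpr hsA
        · intro hx
          simp only [Set.mem_preimage] at hx
          by_cases hform : ∃ s : {s : S // s ≠ 0}, x = some (β, s, γ)
          · obtain ⟨s, rfl⟩ := hform
            rw [hgmem] at hx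
            exact ⟨s, (hmemV s).mp hx, rfl⟩
          · push_neg at hform
            rw [hgnone β γ x hform] at hx
            exact absurd (hnoneV.mp hx) h0
      rw [heq]
      exact hV.preimage (hgc β γ)
    · intro h0
      have hnV : none ∈ V := hnoneV.mpr h0
      have heq : UA0 (Set.univ : Set (lam × lam)) A = ⋂ p : lam × lam, g p.1 p.2 ⁻¹' V := by
        ext x
        simp only [Set.mem_iInter, Set.mem_preimage]
        constructor
        · rintro (rfl | ⟨β, γ, s, rfl, hs⟩)
          · intro p
            rw [hgnone p.1 p.2 none (fun s h => Option.some_ne_none _ h.symm)]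
            exact hnV
          · intro p
            by_cases hp : p.1 = β ∧ p.2 = γ
            · obtain ⟨hp1, hp2⟩ := hp
              rw [hp1, hp2, hgmem]
              rcases hs with hs | hs
              · exact absurd (Set.mem_univ _) hs
              · exact (hmemV s).mpr hs
            · rw [hgnone p.1 p.2 _ (by
                intro t ht
                apply hp
                injection ht with ht
                rw [Prod.mk.injEq, Prod.mk.injEq] at ht
                exact ⟨ht.1.symm, ht.2.2.symm⟩)]
              exact hnV
        · intro hx
          cases x with
          | none => exact Or.inl rfl
          | some p =>
            obtain ⟨β, s, γ⟩ := p
            refine Or.inr ⟨β, γ, s, rfl, Or.inr ?_⟩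
            have := hx (β, γ)
            rw [hgmem] at this
            exact (hmemV s).mp this
      rw [heq]
      exact isOpen_iInter_of_finite (fun p => hV.preimage (hgc p.1 p.2))
end

section
/- Let h : B⁰_{λ}(S) → W be a continuous homomorphism from a topological Brandt λ⁰-extension of a semitopological monoid S with zero into a semitopological semigroup W. Then for all α, β, γ, δ ∈ λ and every nonempty A ⊆ S, the subspaces h(A_{αβ}) and h(A_{γδ}) of W are homeomorphic, where A_{αβ} = {(α,s,β) : s ∈ A, s ≠ 0_S}. -/
open Topology Set Filter

/-- For a continuous homomorphism `h` from a topological Brandt extension into a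
semitopological semigroup `W`, the images `h(A_{α,β})` and `h(A_{γ,δ})` are
homeomorphic subspaces of `W`. -/
theorem brandt_image_sheets_homeomorphic {S lam W : Type*} [MonoidWithZero S]
    [Semigroup W] [tB : TopologicalSpace (Brandt S lam)] [TopologicalSpace W]
    (hsepB : SepCont (brandtMul (S := S) (lam := lam)))
    (hsepW : SepCont (fun x y : W => x * y))
    (h : Brandt S lam → W) (hc : Continuous h)
    (hhom : ∀ x y : Brandt S lam, h (brandtMul x y) = h x * h y)
    (A : Set S) (hA : A.Nonempty) (α β γ δ : lam) :
    Nonempty (↥(h '' sheetTrace α β A) ≃ₜ ↥(h '' sheetTrace γ δ A)) := by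
  by_cases hone : (1 : S) = 0
  · have hempty : ∀ (a b : lam), sheetTrace (S := S) (lam := lam) a b A = ∅ := by
      intro a b
      ext x
      simp only [sheetTrace, Set.mem_setOf_eq, Set.mem_empty_iff_false, iff_false]
      rintro ⟨s, hsA, rfl⟩
      exact s.2 (by rw [← mul_one s.1, hone, mul_zero])
    rw [hempty α β, hempty γ δ]
    exact ⟨Homeomorph.refl _⟩
  · set e : {s : S // s ≠ 0} := ⟨1, hone⟩ with he
    have hkey : ∀ (α' β' γ' δ' : lam) (s : {s : S // s ≠ 0}),
        h (some (γ', e, α')) * h (some (α', s, β')) * h (some (β', e, δ'))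
          = h (some (γ', s, δ')) := by
      intro α' β' γ' δ' s
      rw [← hhom, ← hhom]
      congr 1
      have hs := s.2
      simp [brandtMul, hs, he]
    have contmul : ∀ u v : W, Continuous (fun w : W => u * w * v) := fun u v =>
      ((hsepW v).2).comp ((hsepW u).1)
    have maps : ∀ (α' β' γ' δ' : lam) (w : W), w ∈ h '' sheetTrace α' β' A →
        h (some (γ', e, α')) * w * h (some (β', e, δ')) ∈
          h '' sheetTrace (S := S) (lam := lam) γ' δ' A := by
      rintro α' β' γ' δ' w ⟨x, ⟨s, hsA, rfl⟩, rfl⟩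
      exact ⟨some (γ', s, δ'), ⟨s, hsA, rfl⟩, (hkey _ _ _ _ s).symm⟩
    have hinv : ∀ (α' β' γ' δ' : lam) (w : W), w ∈ h '' sheetTrace α' β' A →
        h (some (α', e, γ')) * (h (some (γ', e, α')) * w * h (some (β', e, δ'))) *
          h (some (δ', e, β')) = w := by
      rintro α' β' γ' δ' w ⟨x, ⟨s, hsA, rfl⟩, rfl⟩
      rw [hkey α' β' γ' δ', hkey γ' δ' α' β']
    exact ⟨{
      toFun := fun p => ⟨_, maps α β γ δ p.1 p.2⟩
      invFun := fun p => ⟨_, maps γ δ α β p.1 p.2⟩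
      left_inv := fun p => Subtype.ext (hinv α β γ δ p.1 p.2)
      right_inv := fun p => Subtype.ext (hinv γ δ α β p.1 p.2)
      continuous_toFun := ((contmul _ _).comp continuous_subtype_val).subtype_mk _
      continuous_invFun := ((contmul _ _).comp continuous_subtype_val).subtype_mk _ }⟩
end
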